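/- In the clique-interdiction flow construction: for every x ∈ X* and every path P' as guaranteed (x_{P'} = 1 and a_s, a_t ∈ P'), there are r̄ := n−r paths Q_1,…,Q_{r̄} ∈ 𝒫 such that x_{Q_i} = 1 and |Q_i ∩ {a_v¹ : v ∈ V}| = 1 for all i ∈ [r̄]; moreover, a_v¹ ∈ P' for every v ∈ V for which a_v¹ ∉ Q_i for all i ∈ [r̄]. -/

import Mathlib

open scoped BigOperators

/-- A directed multigraph: arcs `A` with tail and head maps into a vertex type `V`. -/
structure MultiDigraph (V : Type) (A : Type) where
  tail : A → V
  head : A → V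

namespace MultiDigraph

variable {V A : Type}

/-- `p` is (the arc list of) a simple directed `s`-`t`-path in `D`. -/
def IsPath (D : MultiDigraph V A) (s t : V) (p : List A) : Prop :=
  p ≠ [] ∧ List.Chain' (fun a b => D.head a = D.tail b) p ∧
    (p.map D.tail).head? = some s ∧ (p.map D.head).getLast? = some t ∧
    (p.map D.tail ++ [t]).Nodup

/-- The set of simple `s`-`t`-paths of `D`. -/
def pathSet (D : MultiDigraph V A) (s t : V) : Set (List A) := {p | D.IsPath s t p}

/-- `x` is a feasible `s`-`t` path flow with respect to capacities `u`. -/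
def IsFlow (D : MultiDigraph V A) (s t : V) (u : A → ℚ) (x : List A → ℚ) : Prop :=
  (∀ p, 0 ≤ x p) ∧ (∀ p, x p ≠ 0 → D.IsPath s t p) ∧
    ∀ a : A, (∑ᶠ p ∈ {p : List A | D.IsPath s t p ∧ a ∈ p}, x p) ≤ u a

/-- The value of a path flow. -/
noncomputable def value (D : MultiDigraph V A) (s t : V) (x : List A → ℚ) : ℚ :=
  ∑ᶠ p ∈ D.pathSet s t, x p

/-- `λ(x,S)`: the amount of flow on paths meeting `S`. -/
noncomputable def loss (D : MultiDigraph V A) (s t : V) (x : List A → ℚ) (S : Set A) : ℚ :=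
  ∑ᶠ p ∈ {p : List A | D.IsPath s t p ∧ ∃ a ∈ S, a ∈ p}, x p

/-- The amount of flow surviving the failure of `S`. -/
noncomputable def survival (D : MultiDigraph V A) (s t : V) (x : List A → ℚ) (S : Set A) : ℚ :=
  ∑ᶠ p ∈ {p : List A | D.IsPath s t p ∧ ∀ a ∈ S, a ∉ p}, x p

/-- A feasible multicommodity path flow meeting all demands exactly. -/
def IsMultiFlow {K : Type} (D : MultiDigraph V A) (u : A → ℚ)
    (src snk : K → V) (dem : K → ℚ) (x : K → List A → ℚ) : Prop :=
  (∀ i p, 0 ≤ x i p) ∧ (∀ i p, x i p ≠ 0 → D.IsPath (src i) (snk i) p) ∧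
    (∀ a : A,
      (∑ᶠ i : K, ∑ᶠ p ∈ {p : List A | D.IsPath (src i) (snk i) p ∧ a ∈ p}, x i p) ≤ u a) ∧
    (∀ i : K, (∑ᶠ p ∈ D.pathSet (src i) (snk i), x i p) = dem i)

/-- `λ(x,S)` for a multicommodity flow. -/
noncomputable def multiLoss {K : Type} (D : MultiDigraph V A)
    (src snk : K → V) (x : K → List A → ℚ) (S : Set A) : ℚ :=
  ∑ᶠ i : K, ∑ᶠ p ∈ {p : List A | D.IsPath (src i) (snk i) p ∧ ∃ a ∈ S, a ∈ p}, x i p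

end MultiDigraph

/-- `S` is a legal failure scenario for compatibility graph `H` and budget `k`:
a clique of `H` of cardinality at most `k`. -/
def cliqueScenario {A : Type} (H : SimpleGraph A) (k : ℕ) (S : Set A) : Prop :=
  S.Finite ∧ S.ncard ≤ k ∧ H.IsClique S

section CliqueInterdiction

/-- Nodes of the clique-interdiction flow construction. -/
inductive CNode (n : ℕ) : Type
  | s | s0 | s1 | t0 | t1 | t
  | v (i : Fin (n + 1))
  | y (i : Fin n) (b : Bool)
  | z (i : Fin n) (b : Bool)

/-- Arcs of the clique-interdiction flow construction (all of capacity 1);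
`b = false` stands for superscript `0` and `b = true` for superscript `1`;
the bundle `A_{st}` has `k − 2 = ℓ − 1` arcs. -/
inductive CArc (n r ℓ : ℕ) : Type
  | as                          -- a_s = (s, v_1)
  | at'                         -- a_t = (v_{n+1}, t)
  | vy (i : Fin n) (b : Bool)   -- (v_i, y_i^b)
  | yz (i : Fin n) (b : Bool)   -- a^b_{v_i} = (y_i^b, z_i^b)
  | zv (i : Fin n) (b : Bool)   -- (z_i^b, v_{i+1})
  | as0 (j : Fin r)             -- bundle A_s⁰: (s, s⁰)
  | at0 (j : Fin r)             -- bundle A_t⁰: (t⁰, t)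
  | s0y (i : Fin n)             -- (s⁰, y_i⁰)
  | zt0 (i : Fin n)             -- (z_i⁰, t⁰)
  | as1 (j : Fin (n - r))       -- bundle A_s¹: (s, s¹)
  | at1 (j : Fin (n - r))       -- bundle A_t¹: (t¹, t)
  | s1y (i : Fin n)             -- (s¹, y_i¹)
  | zt1 (i : Fin n)             -- (z_i¹, t¹)
  | ast (j : Fin (ℓ - 1))       -- bundle A_{st}: (s, t)

variable (n r ℓ : ℕ)

/-- The digraph of the clique-interdiction flow construction. -/
def cD : MultiDigraph (CNode n) (CArc n r ℓ) where
  tail a :=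
    match a with
    | .as => .s
    | .at' => .v (Fin.last n)
    | .vy i _ => .v i.castSucc
    | .yz i b => .y i b
    | .zv i b => .z i b
    | .as0 _ => .s
    | .at0 _ => .t0
    | .s0y _ => .s0
    | .zt0 i => .z i false
    | .as1 _ => .s
    | .at1 _ => .t1
    | .s1y _ => .s1
    | .zt1 i => .z i true
    | .ast _ => .s
  head a :=
    match a with
    | .as => .v 0
    | .at' => .t
    | .vy i b => .y i b
    | .yz i b => .z i b
    | .zv i _ => .v i.succ
    | .as0 _ => .s0
    | .at0 _ => .t
    | .s0y i => .y i false
    | .zt0 _ => .t0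
    | .as1 _ => .s1
    | .at1 _ => .t
    | .s1y i => .y i true
    | .zt1 _ => .t1
    | .ast _ => .t

/-- The set `S̄ := A_{st} ∪ {a_s, a_t}`. -/
def inSbar : CArc n r ℓ → Prop
  | .as => True
  | .at' => True
  | .ast _ => True
  | _ => False

/-- The compatibility graph of the clique-interdiction flow construction:
`{a_v¹, a_w¹}` for every edge `{v,w}` of `G`, `{a_s, a_v¹}` for every vertex `v`,
and all 2-element subsets of `S̄`. -/
def cH (G : SimpleGraph (Fin n)) : SimpleGraph (CArc n r ℓ) :=
  SimpleGraph.fromRel (fun x y =>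
    (∃ i j : Fin n, G.Adj i j ∧ x = CArc.yz i true ∧ y = CArc.yz j true) ∨
    (∃ i : Fin n, x = CArc.as ∧ y = CArc.yz i true) ∨
    (inSbar n r ℓ x ∧ inSbar n r ℓ y))

/-- Membership in `X*`: an integral `s`-`t` path flow of value `θ = n + ℓ` (unit
capacities) with `λ(x,S) ≤ k − 1 = ℓ` for every clique scenario `S ∈ S_{H,k}`,
`k = ℓ + 1`. -/
def memXstar (G : SimpleGraph (Fin n)) (x : List (CArc n r ℓ) → ℚ) : Prop :=
  (cD n r ℓ).IsFlow CNode.s CNode.t (fun _ => 1) x ∧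
  (∀ p, ∃ zp : ℤ, x p = (zp : ℚ)) ∧
  (cD n r ℓ).value CNode.s CNode.t x = (n : ℚ) + (ℓ : ℚ) ∧
  (∀ S : Set (CArc n r ℓ), cliqueScenario (cH n r ℓ G) (ℓ + 1) S →
    (cD n r ℓ).loss CNode.s CNode.t x S ≤ (ℓ : ℚ))

end CliqueInterdiction

namespace MultiDigraph
variable {V A : Type}
variable {D : MultiDigraph V A} {s t : V} {p : List A}

lemma IsPath.tails_nodup (hp : D.IsPath s t p) : (p.map D.tail).Nodup :=
  (List.nodup_append.mp hp.2.2.2.2).1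

lemma IsPath.nodup (hp : D.IsPath s t p) : p.Nodup :=
  List.Nodup.of_map _ hp.tails_nodup

lemma IsPath.exists_first (hp : D.IsPath s t p) : ∃ a l, p = a :: l ∧ D.tail a = s := by
  obtain ⟨a, l, rfl⟩ := List.exists_cons_of_ne_nil hp.1
  refine ⟨a, l, rfl, ?_⟩
  have := hp.2.2.1
  simp [List.head?_map] at this
  exact this

lemma IsPath.tail_injOn (hp : D.IsPath s t p) {a b : A} (ha : a ∈ p) (hb : b ∈ p)
    (h : D.tail a = D.tail b) : a = b :=
  List.inj_on_of_nodup_map hp.tails_nodup ha hb h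

lemma IsPath.tail_eq_s (hp : D.IsPath s t p) {a : A} (ha : a ∈ p) (h : D.tail a = s) :
    ∃ l, p = a :: l := by
  obtain ⟨a0, l, rfl, h0⟩ := hp.exists_first
  have : a = a0 := hp.tail_injOn ha (by simp) (h.trans h0.symm)
  exact ⟨l, by rw [this]⟩

private lemma pred_aux {R : A → A → Prop} :
    ∀ (l : List A) (a0 : A), List.Chain' R (a0 :: l) → ∀ a ∈ l, ∃ b ∈ a0 :: l, R b a := by
  intro l
  induction l with
  | nil => simp
  | cons c l ih =>
    intro a0 hc a ha
    replace hc := List.isChain_cons_cons.mp hc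
    rcases List.mem_cons.mp ha with rfl | ha
    · exact ⟨a0, by simp, hc.1⟩
    · obtain ⟨b, hb, hr⟩ := ih c hc.2 a ha
      exact ⟨b, by simp [List.mem_cons] at hb ⊢; tauto, hr⟩

lemma IsPath.pred (hp : D.IsPath s t p) {a : A} (ha : a ∈ p) (h : D.tail a ≠ s) :
    ∃ b ∈ p, D.head b = D.tail a := by
  obtain ⟨a0, l, rfl, h0⟩ := hp.exists_first
  rcases List.mem_cons.mp ha with rfl | ha
  · exact absurd h0 h
  · exact pred_aux l a0 hp.2.1 a ha

private lemma succ_aux {R : A → A → Prop} :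
    ∀ (l : List A), List.Chain' R l → ∀ a ∈ l,
      (∃ b ∈ l, R a b) ∨ (∃ h : l ≠ [], a = l.getLast h) := by
  intro l
  induction l with
  | nil => simp
  | cons c l ih =>
    intro hc a ha
    rcases List.mem_cons.mp ha with rfl | ha
    · cases l with
      | nil => exact Or.inr ⟨by simp, by simp⟩
      | cons d l' =>
        replace hc := List.isChain_cons_cons.mp hc
        exact Or.inl ⟨d, by simp, hc.1⟩
    · have hl : l ≠ [] := List.ne_nil_of_mem ha
      rcases ih hc.tail a ha with ⟨b, hb, hr⟩ | ⟨h', rfl⟩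
      · exact Or.inl ⟨b, by simp [hb], hr⟩
      · exact Or.inr ⟨by simp, (List.getLast_cons hl).symm⟩

lemma IsPath.head_getLast (hp : D.IsPath s t p) : D.head (p.getLast hp.1) = t := by
  have := hp.2.2.2.1
  rw [List.getLast?_map, List.getLast?_eq_getLast hp.1] at this
  simpa using this

lemma IsPath.succ (hp : D.IsPath s t p) {a : A} (ha : a ∈ p) (h : D.head a ≠ t) :
    ∃ b ∈ p, D.tail b = D.head a := by
  rcases succ_aux p hp.2.1 a ha with ⟨b, hb, hr⟩ | ⟨h', rfl⟩
  · exact ⟨b, hb, hr.symm⟩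
  · exact absurd hp.head_getLast h

lemma finite_pathSet [Fintype V] [Finite A] : (D.pathSet s t).Finite := by
  apply Set.Finite.subset (List.finite_length_le A (Fintype.card V))
  intro p hp
  have : (p.map D.tail).Nodup := IsPath.tails_nodup hp
  simpa using this.length_le_card
end MultiDigraph
deriving instance DecidableEq for CNode
deriving instance DecidableEq for CArc
deriving instance Fintype for CNode
deriving instance Fintype for CArc

namespace CliqueAux
open CArc CNode

variable {n r ℓ : ℕ}

lemma tail_ne_t (c : CArc n r ℓ) : (cD n r ℓ).tail c ≠ CNode.t := by
  cases c <;> simp [cD]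

lemma tail_eq_y {c : CArc n r ℓ} {i : Fin n} {b : Bool}
    (h : (cD n r ℓ).tail c = CNode.y i b) : c = CArc.yz i b := by
  cases c <;> simp_all [cD]

lemma tail_eq_s1 {c : CArc n r ℓ} (h : (cD n r ℓ).tail c = CNode.s1) :
    ∃ i, c = CArc.s1y i := by
  cases c <;> simp_all [cD]

lemma tail_eq_s0 {c : CArc n r ℓ} (h : (cD n r ℓ).tail c = CNode.s0) :
    ∃ i, c = CArc.s0y i := by
  cases c <;> simp_all [cD]

lemma head_eq_z {c : CArc n r ℓ} {i : Fin n} {b : Bool}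
    (h : (cD n r ℓ).head c = CNode.z i b) : c = CArc.yz i b := by
  cases c <;> simp_all [cD]

lemma head_eq_s1 {c : CArc n r ℓ} (h : (cD n r ℓ).head c = CNode.s1) :
    ∃ j, c = CArc.as1 j := by
  cases c <;> simp_all [cD]

lemma head_eq_s0 {c : CArc n r ℓ} (h : (cD n r ℓ).head c = CNode.s0) :
    ∃ j, c = CArc.as0 j := by
  cases c <;> simp_all [cD]

lemma head_eq_y {c : CArc n r ℓ} {i : Fin n} {b : Bool}
    (h : (cD n r ℓ).head c = CNode.y i b) :
    c = CArc.vy i b ∨ (b = false ∧ c = CArc.s0y i) ∨ (b = true ∧ c = CArc.s1y i) := by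
  cases c <;> simp_all [cD]

lemma head_eq_vsucc {c : CArc n r ℓ} {j : Fin n}
    (h : (cD n r ℓ).head c = CNode.v j.succ) : ∃ b, c = CArc.zv j b := by
  cases c with
  | as => simp [cD] at h; exact absurd h.symm (Fin.succ_ne_zero j)
  | zv i b =>
    simp [cD] at h
    exact ⟨b, by rw [h]⟩
  | _ => simp [cD] at h

end CliqueAux

namespace CliqueAux
open MultiDigraph

variable {n r ℓ : ℕ} {p : List (CArc n r ℓ)}

lemma s1_path (hp : (cD n r ℓ).IsPath CNode.s CNode.t p) {j : Fin (n - r)}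
    (h : CArc.as1 j ∈ p) : ∃ i, CArc.yz i true ∈ p := by
  obtain ⟨b, hb, htb⟩ := hp.succ h (by simp [cD])
  rw [show (cD n r ℓ).head (CArc.as1 j) = CNode.s1 from rfl] at htb
  obtain ⟨i, rfl⟩ := tail_eq_s1 htb
  obtain ⟨c, hc, htc⟩ := hp.succ hb (by simp [cD])
  rw [show (cD n r ℓ).head (CArc.s1y i) = CNode.y i true from rfl] at htc
  exact ⟨i, tail_eq_y htc ▸ hc⟩

lemma s0_path (hp : (cD n r ℓ).IsPath CNode.s CNode.t p) {j : Fin r}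
    (h : CArc.as0 j ∈ p) : ∃ i, CArc.yz i false ∈ p := by
  obtain ⟨b, hb, htb⟩ := hp.succ h (by simp [cD])
  rw [show (cD n r ℓ).head (CArc.as0 j) = CNode.s0 from rfl] at htb
  obtain ⟨i, rfl⟩ := tail_eq_s0 htb
  obtain ⟨c, hc, htc⟩ := hp.succ hb (by simp [cD])
  rw [show (cD n r ℓ).head (CArc.s0y i) = CNode.y i false from rfl] at htc
  exact ⟨i, tail_eq_y htc ▸ hc⟩

lemma ast_path (hp : (cD n r ℓ).IsPath CNode.s CNode.t p) {j : Fin (ℓ - 1)}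
    (h : CArc.ast j ∈ p) : p = [CArc.ast j] := by
  obtain ⟨l, rfl⟩ := hp.tail_eq_s h rfl
  cases l with
  | nil => rfl
  | cons c l' =>
    have := (List.isChain_cons_cons.mp hp.2.1).1
    exact absurd this.symm (tail_ne_t c)

lemma no_entry (hp : (cD n r ℓ).IsPath CNode.s CNode.t p) (has : CArc.as ∈ p)
    {d : CArc n r ℓ} (hd : d ∈ p) {i : Fin n} :
    d ≠ CArc.s0y i ∧ d ≠ CArc.s1y i := by
  constructor
  · rintro rfl
    obtain ⟨b, hb, hhb⟩ := hp.pred hd (by simp [cD])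
    rw [show (cD n r ℓ).tail (CArc.s0y i) = CNode.s0 from rfl] at hhb
    obtain ⟨jj, rfl⟩ := head_eq_s0 hhb
    have : CArc.as0 jj = CArc.as := hp.tail_injOn hb has rfl
    simp at this
  · rintro rfl
    obtain ⟨b, hb, hhb⟩ := hp.pred hd (by simp [cD])
    rw [show (cD n r ℓ).tail (CArc.s1y i) = CNode.s1 from rfl] at hhb
    obtain ⟨jj, rfl⟩ := head_eq_s1 hhb
    have : CArc.as1 jj = CArc.as := hp.tail_injOn hb has rfl
    simp at this

lemma step_back (hp : (cD n r ℓ).IsPath CNode.s CNode.t p) (has : CArc.as ∈ p)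
    {j : Fin n} {a : CArc n r ℓ} (ha : a ∈ p)
    (hta : (cD n r ℓ).tail a = CNode.v j.succ) :
    ∃ b', CArc.yz j b' ∈ p ∧ CArc.vy j b' ∈ p := by
  obtain ⟨b, hb, hhb⟩ := hp.pred ha (by rw [hta]; simp)
  rw [hta] at hhb
  obtain ⟨b0, rfl⟩ := head_eq_vsucc hhb
  obtain ⟨c, hc, hhc⟩ := hp.pred hb (by simp [cD])
  rw [show (cD n r ℓ).tail (CArc.zv j b0) = CNode.z j b0 from rfl] at hhc
  have := head_eq_z hhc; subst this
  obtain ⟨d, hd, hhd⟩ := hp.pred hc (by simp [cD])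
  rw [show (cD n r ℓ).tail (CArc.yz j b0) = CNode.y j b0 from rfl] at hhd
  rcases head_eq_y hhd with rfl | ⟨_, rfl⟩ | ⟨_, rfl⟩
  · exact ⟨b0, hc, hd⟩
  · exact absurd rfl (no_entry hp has hd).1
  · exact absurd rfl (no_entry hp has hd).2

lemma P'_chain (hp : (cD n r ℓ).IsPath CNode.s CNode.t p) (has : CArc.as ∈ p)
    (hat : CArc.at' ∈ p) (j : Fin n) : ∃ b, CArc.yz j b ∈ p := by
  have K : ∀ m : ℕ, m ≤ n → ∃ a ∈ p, (cD n r ℓ).tail a = CNode.v ⟨n - m, by omega⟩ := by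
    intro m
    induction m with
    | zero =>
      intro _
      refine ⟨CArc.at', hat, ?_⟩
      show CNode.v (Fin.last n) = _
      congr 1
    | succ m ih =>
      intro hm
      obtain ⟨a, ha, hta⟩ := ih (by omega)
      set jj : Fin n := ⟨n - (m + 1), by omega⟩ with hjj
      have he : (⟨n - m, by omega⟩ : Fin (n + 1)) = jj.succ := Fin.ext (by simp [hjj]; omega)
      rw [he] at hta
      obtain ⟨b', _, hvy⟩ := step_back hp has ha hta
      refine ⟨CArc.vy jj b', hvy, ?_⟩
      show CNode.v jj.castSucc = _
      congr 1
  obtain ⟨a, ha, hta⟩ := K (n - (j.val + 1)) (by omega)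
  have he : (⟨n - (n - (j.val + 1)), by omega⟩ : Fin (n + 1)) = j.succ :=
    Fin.ext (by simp; omega)
  rw [he] at hta
  obtain ⟨b', hyz, _⟩ := step_back hp has ha hta
  exact ⟨b', hyz⟩

end CliqueAux

namespace CliqueAux
open MultiDigraph

lemma sum_eq_one_unique {ι : Type} (s : Finset ι) (f : ι → ℚ)
    (h0 : ∀ i ∈ s, 0 ≤ f i) (hz : ∀ i, ∃ z : ℤ, f i = (z : ℚ))
    (h1 : ∑ i ∈ s, f i = 1) :
    ∃ p ∈ s, f p = 1 ∧ ∀ q ∈ s, q ≠ p → f q = 0 := by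
  classical
  obtain ⟨p, hps, hp0⟩ := Finset.exists_ne_zero_of_sum_ne_zero (f := f) (by rw [h1]; norm_num)
  have hp1 : 1 ≤ f p := by
    obtain ⟨z, hzp⟩ := hz p
    have : 0 ≤ z := by
      have := h0 p hps; rw [hzp] at this; exact_mod_cast this
    have hz0 : z ≠ 0 := by rintro rfl; simp [hzp] at hp0
    have : 1 ≤ z := by omega
    rw [hzp]; exact_mod_cast this
  have hsplit : f p + ∑ q ∈ s.erase p, f q = 1 := by
    rw [Finset.add_sum_erase _ _ hps, h1]
  have hrest0 : ∑ q ∈ s.erase p, f q ≤ 0 := by linarith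
  have hrest0' : ∑ q ∈ s.erase p, f q = 0 :=
    le_antisymm hrest0 (Finset.sum_nonneg fun q hq => h0 q (Finset.mem_of_mem_erase hq))
  have hzero : ∀ q ∈ s.erase p, f q = 0 :=
    (Finset.sum_eq_zero_iff_of_nonneg fun q hq => h0 q (Finset.mem_of_mem_erase hq)).mp hrest0'
  refine ⟨p, hps, by linarith, fun q hqs hqp => hzero q (Finset.mem_erase.mpr ⟨hqp, hqs⟩)⟩

lemma pw_le {ι : Type} (s : Finset ι) (f : ι → ℚ) (h : ∀ i ∈ s, f i ≤ 1)
    (hs : (s.card : ℚ) ≤ ∑ i ∈ s, f i) : ∀ i ∈ s, f i = 1 := by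
  have h2 : ∑ i ∈ s, (1 - f i) = 0 := by
    have hle : ∑ i ∈ s, f i ≤ (s.card : ℚ) := by
      calc ∑ i ∈ s, f i ≤ ∑ _i ∈ s, (1 : ℚ) := Finset.sum_le_sum h
        _ = s.card := by simp
    have : ∑ i ∈ s, f i = (s.card : ℚ) := le_antisymm hle hs
    rw [Finset.sum_sub_distrib, this]; simp
  intro i hi
  have := (Finset.sum_eq_zero_iff_of_nonneg fun j hj => by linarith [h j hj]).mp h2 i hi
  linarith

lemma pw_ge {ι : Type} (s : Finset ι) (f : ι → ℚ) (h : ∀ i ∈ s, 1 ≤ f i)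
    (hs : ∑ i ∈ s, f i ≤ (s.card : ℚ)) : ∀ i ∈ s, f i = 1 := by
  have h2 : ∑ i ∈ s, (f i - 1) = 0 := by
    have hge : (s.card : ℚ) ≤ ∑ i ∈ s, f i := by
      calc (s.card : ℚ) = ∑ _i ∈ s, (1 : ℚ) := by simp
        _ ≤ ∑ i ∈ s, f i := Finset.sum_le_sum h
    have : ∑ i ∈ s, f i = (s.card : ℚ) := le_antisymm hs hge
    rw [Finset.sum_sub_distrib, this]; simp
  intro i hi
  have := (Finset.sum_eq_zero_iff_of_nonneg fun j hj => by linarith [h j hj]).mp h2 i hi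
  linarith

lemma double_count {α β : Type} [DecidableEq α] [DecidableEq β]
    (S : Finset α) (T : Finset β) (mem : α → β → Prop) [∀ a b, Decidable (mem a b)]
    (f : β → ℚ) :
    ∑ a ∈ S, ∑ b ∈ T.filter (mem a ·), f b
      = ∑ b ∈ T, ((S.filter (mem · b)).card : ℚ) * f b := by
  simp only [Finset.sum_filter]
  rw [Finset.sum_comm]
  refine Finset.sum_congr rfl fun b _ => ?_
  rw [← Finset.sum_filter, Finset.sum_const, nsmul_eq_mul]

variable (n r ℓ : ℕ)

def outS : Finset (CArc n r ℓ) :=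
  insert CArc.as ((Finset.univ.image CArc.as0 ∪ Finset.univ.image CArc.as1) ∪
    Finset.univ.image CArc.ast)

def yzS : Finset (CArc n r ℓ) :=
  Finset.univ.image (fun q : Fin n × Bool => CArc.yz q.1 q.2)

variable {n r ℓ}

lemma mem_outS {a : CArc n r ℓ} : a ∈ outS n r ℓ ↔ (cD n r ℓ).tail a = CNode.s := by
  cases a <;> simp [outS, cD]

lemma mem_outS_cases {a : CArc n r ℓ} (h : a ∈ outS n r ℓ) :
    a = CArc.as ∨ (∃ j, a = CArc.as0 j) ∨ (∃ j, a = CArc.as1 j) ∨ (∃ j, a = CArc.ast j) := by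
  cases a <;> simp_all [outS, cD]

lemma mem_yzS {a : CArc n r ℓ} : a ∈ yzS n r ℓ ↔ ∃ i b, a = CArc.yz i b := by
  cases a <;> simp [yzS]

lemma card_outS (hℓ : 1 ≤ ℓ) (hr : r ≤ n) : (outS n r ℓ).card = n + ℓ := by
  rw [outS, Finset.card_insert_of_notMem (by simp),
    Finset.card_union_of_disjoint (by
      simp only [Finset.disjoint_left, Finset.mem_union, Finset.mem_image, Finset.mem_univ,
        true_and]
      rintro a (⟨j, rfl⟩ | ⟨j, rfl⟩) ⟨x, hx⟩ <;> simp at hx),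
    Finset.card_union_of_disjoint (by simp [Finset.disjoint_left]),
    Finset.card_image_of_injective _ (fun a b h => by simpa using h),
    Finset.card_image_of_injective _ (fun a b h => by simpa using h),
    Finset.card_image_of_injective _ (fun a b h => by simpa using h)]
  simp
  omega

lemma card_yzS : (yzS n r ℓ).card = 2 * n := by
  rw [yzS, Finset.card_image_of_injective _ (fun a b h => by
    obtain ⟨a1, a2⟩ := a; obtain ⟨b1, b2⟩ := b; simpa [Prod.ext_iff] using h)]
  simp [Fintype.card_prod]
  ring

lemma sum_outS (g : CArc n r ℓ → ℚ) :
    ∑ a ∈ outS n r ℓ, g a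
      = g CArc.as + ((∑ j : Fin r, g (CArc.as0 j)) + ∑ j : Fin (n - r), g (CArc.as1 j))
        + ∑ j : Fin (ℓ - 1), g (CArc.ast j) := by
  rw [outS, Finset.sum_insert (by simp),
    Finset.sum_union (by
      simp only [Finset.disjoint_left, Finset.mem_union, Finset.mem_image, Finset.mem_univ,
        true_and]
      rintro a (⟨j, rfl⟩ | ⟨j, rfl⟩) ⟨x, hx⟩ <;> simp at hx),
    Finset.sum_union (by simp [Finset.disjoint_left]),
    Finset.sum_image (fun a _ b _ h => by simpa using h),
    Finset.sum_image (fun a _ b _ h => by simpa using h),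
    Finset.sum_image (fun a _ b _ h => by simpa using h)]
  ring

lemma outS_filter_card {p : List (CArc n r ℓ)}
    (hp : (cD n r ℓ).IsPath CNode.s CNode.t p) :
    ((outS n r ℓ).filter (· ∈ p)).card = 1 := by
  obtain ⟨a0, l, rfl, h0⟩ := hp.exists_first
  have : (outS n r ℓ).filter (· ∈ a0 :: l) = {a0} := by
    ext c
    simp only [Finset.mem_filter, Finset.mem_singleton, mem_outS]
    constructor
    · rintro ⟨htc, hcp⟩
      exact hp.tail_injOn hcp (by simp) (htc.trans h0.symm)
    · rintro rfl
      exact ⟨h0, by simp⟩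
  rw [this, Finset.card_singleton]

end CliqueAux

open CliqueAux MultiDigraph in
/-- In the clique-interdiction flow construction: for every `x ∈ X*`
and every flow-carrying path `P'` containing `a_s` and `a_t`, there are `r̄ := n − r`
distinct flow-carrying paths `Q_1, …, Q_{r̄}`, each containing exactly one arc of the
form `a_v¹`; moreover every `v ∈ V` whose arc `a_v¹` lies on none of the `Q_i` satisfies
`a_v¹ ∈ P'`. -/
theorem cliqueInterdiction_path_structure
    (n r ℓ : ℕ) (hℓ : 1 ≤ ℓ) (hr : r ≤ n) (G : SimpleGraph (Fin n))
    (x : List (CArc n r ℓ) → ℚ) (hx : memXstar n r ℓ G x)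
    (P' : List (CArc n r ℓ)) (hP'path : (cD n r ℓ).IsPath CNode.s CNode.t P')
    (hP'flow : x P' = 1) (hPas : CArc.as ∈ P') (hPat : CArc.at' ∈ P') :
    ∃ Q : Fin (n - r) → List (CArc n r ℓ),
      Function.Injective Q ∧
      (∀ i : Fin (n - r),
        (cD n r ℓ).IsPath CNode.s CNode.t (Q i) ∧ x (Q i) = 1 ∧
        {v : Fin n | CArc.yz v true ∈ Q i}.ncard = 1) ∧
      (∀ v : Fin n, (∀ i : Fin (n - r), CArc.yz v true ∉ Q i) →
        CArc.yz v true ∈ P') := by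
  classical
  obtain ⟨⟨hnn, hsupp, hcap⟩, hint, hval, -⟩ := hx
  have hPfin : ((cD n r ℓ).pathSet CNode.s CNode.t).Finite := finite_pathSet
  set P0 : Finset (List (CArc n r ℓ)) := hPfin.toFinset with hP0
  have hmemP0 : ∀ {p : List (CArc n r ℓ)},
      p ∈ P0 ↔ (cD n r ℓ).IsPath CNode.s CNode.t p := by
    intro p; rw [hP0, Set.Finite.mem_toFinset]; exact Iff.rfl
  set F : CArc n r ℓ → ℚ := fun a => ∑ p ∈ P0.filter (a ∈ ·), x p with hF
  have hFeq : ∀ a : CArc n r ℓ,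
      F a = ∑ᶠ p ∈ {p : List (CArc n r ℓ) |
        (cD n r ℓ).IsPath CNode.s CNode.t p ∧ a ∈ p}, x p := by
    intro a
    have hsets : ((P0.filter (a ∈ ·) : Finset (List (CArc n r ℓ))) : Set (List (CArc n r ℓ)))
        = {p : List (CArc n r ℓ) | (cD n r ℓ).IsPath CNode.s CNode.t p ∧ a ∈ p} := by
      ext p
      simp only [Finset.coe_filter, Set.mem_setOf_eq, hmemP0]
    rw [← hsets, finsum_mem_coe_finset]
  have hFle : ∀ a, F a ≤ 1 := fun a => by rw [hFeq]; exact hcap a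
  have hvalue : ∑ p ∈ P0, x p = (n : ℚ) + ℓ := by
    have hsets : ((P0 : Finset (List (CArc n r ℓ))) : Set (List (CArc n r ℓ)))
        = (cD n r ℓ).pathSet CNode.s CNode.t := Set.Finite.coe_toFinset hPfin
    rw [← hval, MultiDigraph.value, ← hsets, finsum_mem_coe_finset]
  have hswap : ∀ S : Finset (CArc n r ℓ),
      ∑ a ∈ S, F a = ∑ p ∈ P0, ((S.filter (· ∈ p)).card : ℚ) * x p := fun S =>
    double_count S P0 (fun a p => a ∈ p) x
  -- all source arcs are saturated
  have houtSum : ∑ a ∈ outS n r ℓ, F a = (n : ℚ) + ℓ := by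
    rw [hswap,
      Finset.sum_congr rfl (fun p hp => by
        rw [outS_filter_card (hmemP0.mp hp), Nat.cast_one, one_mul])]
    exact hvalue
  have hFone : ∀ a ∈ outS n r ℓ, F a = 1 := by
    refine pw_le _ _ (fun a _ => hFle a) ?_
    rw [houtSum, card_outS hℓ hr]
    push_cast
    exact le_rfl
  -- the unique flow path through each source arc
  have hUS : ∀ a : CArc n r ℓ, ∃ p, a ∈ outS n r ℓ →
      ((cD n r ℓ).IsPath CNode.s CNode.t p ∧ a ∈ p ∧ x p = 1 ∧
        ∀ q, a ∈ q → q ≠ p → x q = 0) := by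
    intro a
    by_cases ha : a ∈ outS n r ℓ
    · have h1 : ∑ p ∈ P0.filter (a ∈ ·), x p = 1 := hFone a ha
      obtain ⟨p, hpmem, hp1, huniq⟩ :=
        sum_eq_one_unique _ _ (fun i _ => hnn i) hint h1
      rw [Finset.mem_filter] at hpmem
      refine ⟨p, fun _ => ⟨hmemP0.mp hpmem.1, hpmem.2, hp1, fun q haq hqp => ?_⟩⟩
      by_cases hq0 : x q = 0
      · exact hq0
      · exact huniq q (Finset.mem_filter.mpr ⟨hmemP0.mpr (hsupp q hq0), haq⟩) hqp
    · exact ⟨[], fun h => absurd h ha⟩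
  choose Pf hPf using hUS
  have hPfPath : ∀ a ∈ outS n r ℓ, (cD n r ℓ).IsPath CNode.s CNode.t (Pf a) :=
    fun a ha => (hPf a ha).1
  have hPfMem : ∀ a ∈ outS n r ℓ, a ∈ Pf a := fun a ha => (hPf a ha).2.1
  have hPfOne : ∀ a ∈ outS n r ℓ, x (Pf a) = 1 := fun a ha => (hPf a ha).2.2.1
  have hPfuniq : ∀ a ∈ outS n r ℓ, ∀ q, x q ≠ 0 → a ∈ q → q = Pf a := by
    intro a ha q hq haq
    by_contra hne
    exact hq ((hPf a ha).2.2.2 q haq hne)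
  have hasmem : CArc.as ∈ outS n r ℓ := mem_outS.mpr rfl
  have has1mem : ∀ j : Fin (n - r), CArc.as1 j ∈ outS n r ℓ := fun j => mem_outS.mpr rfl
  have has0mem : ∀ j : Fin r, CArc.as0 j ∈ outS n r ℓ := fun j => mem_outS.mpr rfl
  have hastmem : ∀ j : Fin (ℓ - 1), CArc.ast j ∈ outS n r ℓ := fun j => mem_outS.mpr rfl
  have hP'eq : P' = Pf CArc.as :=
    hPfuniq CArc.as hasmem P' (by rw [hP'flow]; norm_num) hPas
  -- every flow path is one of the Pf a
  have hsupp' : ∀ p, x p ≠ 0 → ∃ a ∈ outS n r ℓ, p = Pf a := by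
    intro p hp
    have hpath := hsupp p hp
    obtain ⟨a0, l, rfl, h0⟩ := hpath.exists_first
    have ha0 : a0 ∈ outS n r ℓ := mem_outS.mpr h0
    exact ⟨a0, ha0, hPfuniq a0 ha0 _ hp (by simp)⟩
  have hPfinj : ∀ a ∈ outS n r ℓ, ∀ b ∈ outS n r ℓ, Pf a = Pf b → a = b := by
    intro a ha b hb h
    have hbp : b ∈ Pf a := h ▸ hPfMem b hb
    exact (hPfPath a ha).tail_injOn (hPfMem a ha) hbp
      ((mem_outS.mp ha).trans (mem_outS.mp hb).symm)
  -- counting yz arcs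
  set c : List (CArc n r ℓ) → ℕ := fun p => ((yzS n r ℓ).filter (· ∈ p)).card with hc
  have hyzsum : ∑ a ∈ yzS n r ℓ, F a = ∑ a ∈ outS n r ℓ, (c (Pf a) : ℚ) := by
    rw [hswap]
    have himg : (outS n r ℓ).image Pf ⊆ P0 := by
      intro p hp
      obtain ⟨a, ha, rfl⟩ := Finset.mem_image.mp hp
      exact hmemP0.mpr (hPfPath a ha)
    rw [← Finset.sum_subset himg (fun p hp hpn => ?_)]
    · rw [Finset.sum_image (fun a ha b hb h => hPfinj a ha b hb h)]
      refine Finset.sum_congr rfl fun a ha => ?_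
      rw [hPfOne a ha, mul_one, hc]
    · by_cases hxp : x p = 0
      · rw [hxp, mul_zero]
      · obtain ⟨a, ha, rfl⟩ := hsupp' p hxp
        exact absurd (Finset.mem_image_of_mem Pf ha) hpn
  -- lower bounds on yz counts
  have hcP' : (n : ℚ) ≤ (c P' : ℚ) := by
    have hchain : ∀ j : Fin n, ∃ b, CArc.yz j b ∈ P' := P'_chain hP'path hPas hPat
    choose bf hbf using hchain
    have : (Finset.univ : Finset (Fin n)).card ≤ ((yzS n r ℓ).filter (· ∈ P')).card := by
      refine Finset.card_le_card_of_injOn (fun j => CArc.yz j (bf j)) (fun j _ => ?_) ?_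
      · exact Finset.mem_filter.mpr ⟨mem_yzS.mpr ⟨j, bf j, rfl⟩, hbf j⟩
      · intro a _ b _ h
        injection h with h1 h2
    have := this
    simp only [Finset.card_univ, Fintype.card_fin] at this
    exact_mod_cast this
  have hQwit : ∀ j : Fin (n - r), ∃ i, CArc.yz i true ∈ Pf (CArc.as1 j) := fun j =>
    s1_path (hPfPath _ (has1mem j)) (hPfMem _ (has1mem j))
  have hRwit : ∀ j : Fin r, ∃ i, CArc.yz i false ∈ Pf (CArc.as0 j) := fun j =>
    s0_path (hPfPath _ (has0mem j)) (hPfMem _ (has0mem j))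
  have hcQ : ∀ j : Fin (n - r), (1 : ℚ) ≤ (c (Pf (CArc.as1 j)) : ℚ) := by
    intro j
    obtain ⟨i, hi⟩ := hQwit j
    have : 0 < c (Pf (CArc.as1 j)) :=
      Finset.card_pos.mpr ⟨CArc.yz i true,
        Finset.mem_filter.mpr ⟨mem_yzS.mpr ⟨i, true, rfl⟩, hi⟩⟩
    exact_mod_cast this
  have hcR : ∀ j : Fin r, (1 : ℚ) ≤ (c (Pf (CArc.as0 j)) : ℚ) := by
    intro j
    obtain ⟨i, hi⟩ := hRwit j
    have : 0 < c (Pf (CArc.as0 j)) :=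
      Finset.card_pos.mpr ⟨CArc.yz i false,
        Finset.mem_filter.mpr ⟨mem_yzS.mpr ⟨i, false, rfl⟩, hi⟩⟩
    exact_mod_cast this
  have hcT : ∀ j : Fin (ℓ - 1), (c (Pf (CArc.ast j)) : ℚ) = 0 := by
    intro j
    have hpp := ast_path (hPfPath _ (hastmem j)) (hPfMem _ (hastmem j))
    rw [hc]
    simp only [hpp, Nat.cast_eq_zero, Finset.card_eq_zero]
    rw [Finset.filter_eq_empty_iff]
    intro a ha
    obtain ⟨i, b, rfl⟩ := mem_yzS.mp ha
    simp
  -- totals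
  have hyzle : ∑ a ∈ yzS n r ℓ, F a ≤ (2 * n : ℚ) := by
    calc ∑ a ∈ yzS n r ℓ, F a ≤ ∑ _a ∈ yzS n r ℓ, (1 : ℚ) :=
          Finset.sum_le_sum fun a _ => hFle a
      _ = ((yzS n r ℓ).card : ℚ) := by simp
      _ = (2 * n : ℚ) := by rw [card_yzS]; push_cast; ring
  have hsplit : ∑ a ∈ outS n r ℓ, (c (Pf a) : ℚ)
      = (c (Pf CArc.as) : ℚ)
        + ((∑ j : Fin r, (c (Pf (CArc.as0 j)) : ℚ))
          + ∑ j : Fin (n - r), (c (Pf (CArc.as1 j)) : ℚ))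
        + ∑ j : Fin (ℓ - 1), (c (Pf (CArc.ast j)) : ℚ) :=
    sum_outS (fun a => (c (Pf a) : ℚ))
  have hsumT : ∑ j : Fin (ℓ - 1), (c (Pf (CArc.ast j)) : ℚ) = 0 :=
    Finset.sum_eq_zero fun j _ => hcT j
  have hSRge : (r : ℚ) ≤ ∑ j : Fin r, (c (Pf (CArc.as0 j)) : ℚ) := by
    calc (r : ℚ) = ∑ _j : Fin r, (1 : ℚ) := by simp
      _ ≤ _ := Finset.sum_le_sum fun j _ => hcR j
  have hSQge : ((n - r : ℕ) : ℚ) ≤ ∑ j : Fin (n - r), (c (Pf (CArc.as1 j)) : ℚ) := by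
    calc ((n - r : ℕ) : ℚ) = ∑ _j : Fin (n - r), (1 : ℚ) := by simp
      _ ≤ _ := Finset.sum_le_sum fun j _ => hcQ j
  have hcastnr : ((n - r : ℕ) : ℚ) = (n : ℚ) - r := by
    rw [Nat.cast_sub hr]
  have hcP'n : (c P' : ℚ) = (c (Pf CArc.as) : ℚ) := by rw [hP'eq]
  have htotal : ∑ a ∈ outS n r ℓ, (c (Pf a) : ℚ) ≤ 2 * n := by
    rw [← hyzsum]; exact hyzle
  -- pointwise equalities
  have hQone : ∀ j : Fin (n - r), (c (Pf (CArc.as1 j)) : ℚ) = 1 := by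
    have hub : ∑ j : Fin (n - r), (c (Pf (CArc.as1 j)) : ℚ)
        ≤ ((Finset.univ : Finset (Fin (n - r))).card : ℚ) := by
      simp only [Finset.card_univ, Fintype.card_fin]
      rw [hcastnr]
      have := htotal
      rw [hsplit, hsumT] at this
      have h1 := hcP'
      rw [hcP'n] at h1
      linarith [hSRge]
    intro j
    exact pw_ge Finset.univ _ (fun j _ => hcQ j) hub j (Finset.mem_univ j)
  have hRone : ∀ j : Fin r, (c (Pf (CArc.as0 j)) : ℚ) = 1 := by
    have hub : ∑ j : Fin r, (c (Pf (CArc.as0 j)) : ℚ)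
        ≤ ((Finset.univ : Finset (Fin r)).card : ℚ) := by
      simp only [Finset.card_univ, Fintype.card_fin]
      have := htotal
      rw [hsplit, hsumT] at this
      have h1 := hcP'
      rw [hcP'n] at h1
      have h2 := hSQge
      rw [hcastnr] at h2
      linarith
    intro j
    exact pw_ge Finset.univ _ (fun j _ => hcR j) hub j (Finset.mem_univ j)
  have hFyz : ∀ a ∈ yzS n r ℓ, F a = 1 := by
    refine pw_le _ _ (fun a _ => hFle a) ?_
    rw [hyzsum, card_yzS, hsplit, hsumT]
    have h1 := hcP'
    rw [hcP'n] at h1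
    have h2 := hSQge
    rw [hcastnr] at h2
    push_cast
    linarith [hSRge]
  -- the answer
  refine ⟨fun j => Pf (CArc.as1 j), ?_, ?_, ?_⟩
  · intro i j h
    have := hPfinj _ (has1mem i) _ (has1mem j) h
    simpa using this
  · intro j
    refine ⟨hPfPath _ (has1mem j), hPfOne _ (has1mem j), ?_⟩
    obtain ⟨i, hi⟩ := hQwit j
    have hcard1 : ((yzS n r ℓ).filter (· ∈ Pf (CArc.as1 j))).card = 1 := by
      have := hQone j
      rw [hc] at this
      exact_mod_cast this
    have hset : {v : Fin n | CArc.yz v true ∈ Pf (CArc.as1 j)} = {i} := by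
      ext w
      simp only [Set.mem_setOf_eq, Set.mem_singleton_iff]
      constructor
      · intro hw
        have h1 : CArc.yz w true ∈ (yzS n r ℓ).filter (· ∈ Pf (CArc.as1 j)) :=
          Finset.mem_filter.mpr ⟨mem_yzS.mpr ⟨w, true, rfl⟩, hw⟩
        have h2 : CArc.yz i true ∈ (yzS n r ℓ).filter (· ∈ Pf (CArc.as1 j)) :=
          Finset.mem_filter.mpr ⟨mem_yzS.mpr ⟨i, true, rfl⟩, hi⟩
        have := Finset.card_le_one.mp (le_of_eq hcard1) _ h1 _ h2
        injection this
      · rintro rfl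
        exact hi
    rw [hset, Set.ncard_singleton]
  · intro v hv
    have hv1 : F (CArc.yz v true) = 1 :=
      hFyz _ (mem_yzS.mpr ⟨v, true, rfl⟩)
    have hne : ∑ p ∈ P0.filter (CArc.yz v true ∈ ·), x p ≠ 0 := by
      rw [show ∑ p ∈ P0.filter (CArc.yz v true ∈ ·), x p = F (CArc.yz v true) from rfl, hv1]
      norm_num
    obtain ⟨p, hpmem, hp0⟩ := Finset.exists_ne_zero_of_sum_ne_zero hne
    rw [Finset.mem_filter] at hpmem
    obtain ⟨a, ha, rfl⟩ := hsupp' p hp0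
    rcases mem_outS_cases ha with rfl | ⟨j, rfl⟩ | ⟨j, rfl⟩ | ⟨j, rfl⟩
    · rw [hP'eq]; exact hpmem.2
    · -- arc a_s0: the unique yz arc is of false type
      exfalso
      obtain ⟨i, hi⟩ := hRwit j
      have hcard1 : ((yzS n r ℓ).filter (· ∈ Pf (CArc.as0 j))).card = 1 := by
        have := hRone j
        rw [hc] at this
        exact_mod_cast this
      have h1 : CArc.yz v true ∈ (yzS n r ℓ).filter (· ∈ Pf (CArc.as0 j)) :=
        Finset.mem_filter.mpr ⟨mem_yzS.mpr ⟨v, true, rfl⟩, hpmem.2⟩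
      have h2 : CArc.yz i false ∈ (yzS n r ℓ).filter (· ∈ Pf (CArc.as0 j)) :=
        Finset.mem_filter.mpr ⟨mem_yzS.mpr ⟨i, false, rfl⟩, hi⟩
      have := Finset.card_le_one.mp (le_of_eq hcard1) _ h1 _ h2
      simp at this
    · exact absurd hpmem.2 (hv j)
    · exfalso
      have hpp := ast_path (hPfPath _ (hastmem j)) (hPfMem _ (hastmem j))
      rw [hpp] at hpmem
      simp at hpmem
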